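/- For every integer n with 0 ≤ n ≤ 2δ−3 one has τ(M_n) = n(n−2δ+3)/2 + 1, where M_n = npq + 1. -/

import Mathlib

open Finset

/-- Shift lemma for ceilings of `j*a/b`. -/
lemma tTau_ceil_shift (a b : ℕ) (hb : 0 < b) (c j : ℕ) :
    ⌈(((c * b + j : ℕ) : ℚ) * (a : ℚ)) / (b : ℚ)⌉
      = ⌈((j : ℚ) * (a : ℚ)) / (b : ℚ)⌉ + (c : ℤ) * (a : ℤ) := by
  have hb' : (b : ℚ) ≠ 0 := by positivity
  have h : (((c * b + j : ℕ) : ℚ) * (a : ℚ)) / (b : ℚ)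
      = ((j : ℚ) * (a : ℚ)) / (b : ℚ) + ((c : ℤ) * (a : ℤ) : ℤ) := by
    push_cast
    field_simp
    ring
  rw [h, Int.ceil_add_intCast]

/-- Ceiling of an integer value. -/
lemma tTau_ceil_mul (a b c : ℕ) (hb : 0 < b) :
    ⌈(((c * b : ℕ) : ℚ) * (a : ℚ)) / (b : ℚ)⌉ = (c : ℤ) * (a : ℤ) := by
  have := tTau_ceil_shift a b hb c 0
  simpa using this

/-- Pairing: for `0 < k < b` with `a` coprime to `b`,
`⌈ka/b⌉ + ⌈(b-k)a/b⌉ = a + 1`. -/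
lemma tTau_ceil_pair (a b k : ℕ) (hb : 0 < b) (hk : 0 < k) (hkb : k < b)
    (hcop : Nat.Coprime a b) :
    ⌈((k : ℚ) * (a : ℚ)) / (b : ℚ)⌉ + ⌈(((b - k : ℕ) : ℚ) * (a : ℚ)) / (b : ℚ)⌉
      = (a : ℤ) + 1 := by
  have hb' : (b : ℚ) ≠ 0 := by positivity
  set x : ℚ := ((k : ℚ) * (a : ℚ)) / (b : ℚ) with hx
  have h2 : (((b - k : ℕ) : ℚ) * (a : ℚ)) / (b : ℚ) = -x + ((a : ℤ) : ℚ) := by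
    rw [Nat.cast_sub hkb.le, hx]
    push_cast
    field_simp
    ring
  rw [h2, Int.ceil_add_intCast, Int.ceil_neg]
  -- now need ⌈x⌉ - ⌊x⌋ = 1, i.e. x is not an integer
  have hnotint : ¬ (b : ℤ) ∣ (k : ℤ) * (a : ℤ) := by
    intro hdvd
    have hdvd' : b ∣ k * a := by exact_mod_cast hdvd
    have : b ∣ k := (Nat.Coprime.dvd_of_dvd_mul_right (hcop.symm) hdvd')
    exact absurd (Nat.le_of_dvd hk this) (not_le.mpr hkb)
  have hxne : x ≠ (⌊x⌋ : ℚ) := by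
    intro heq
    apply hnotint
    have h3 : ((k : ℤ) * (a : ℤ) : ℚ) = ((⌊x⌋ * (b : ℤ) : ℤ) : ℚ) := by
      push_cast
      have hb2 : x * (b : ℚ) = (k : ℚ) * (a : ℚ) := by
        rw [hx]; field_simp
      rw [heq] at hb2
      linarith
    have h4 : (k : ℤ) * (a : ℤ) = ⌊x⌋ * (b : ℤ) := by exact_mod_cast h3
    exact ⟨⌊x⌋, by linarith⟩
  have hlt : (⌊x⌋ : ℚ) < x := lt_of_le_of_ne (Int.floor_le x) (Ne.symm hxne)
  have hceil : ⌈x⌉ = ⌊x⌋ + 1 := by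
    rw [Int.ceil_eq_iff]
    constructor
    · push_cast; simpa using hlt
    · push_cast; exact (Int.lt_floor_add_one x).le
  rw [hceil]
  ring

/-- Sum over one period. -/
lemma tTau_sum_ceil_period (a b : ℕ) (hb : 0 < b) (hcop : Nat.Coprime a b) :
    2 * ∑ j ∈ range b, ⌈((j : ℚ) * (a : ℚ)) / (b : ℚ)⌉ = ((b : ℤ) - 1) * ((a : ℤ) + 1) := by
  obtain ⟨m, rfl⟩ : ∃ m, b = m + 1 := ⟨b - 1, by omega⟩
  set f : ℕ → ℤ := fun j => ⌈((j : ℚ) * (a : ℚ)) / ((m + 1 : ℕ) : ℚ)⌉ with hf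
  have hf0 : f 0 = 0 := by simp [hf]
  have hS : ∑ j ∈ range (m + 1), f j = ∑ j ∈ range m, f (j + 1) := by
    rw [Finset.sum_range_succ' f m, hf0, add_zero]
  have hrefl : ∑ j ∈ range m, f (j + 1) = ∑ j ∈ range m, f (m - j) := by
    rw [← Finset.sum_range_reflect (fun j => f (j + 1)) m]
    apply Finset.sum_congr rfl
    intro j hj
    simp only [Finset.mem_range] at hj
    congr 1
    omega
  have hpair : ∀ j ∈ range m, f (j + 1) + f (m - j) = (a : ℤ) + 1 := by
    intro j hj
    simp only [Finset.mem_range] at hj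
    have := tTau_ceil_pair a (m + 1) (j + 1) hb (Nat.succ_pos j) (by omega) hcop
    have hmj : m - j = (m + 1) - (j + 1) := by omega
    rw [hmj]
    exact this
  have : 2 * ∑ j ∈ range (m + 1), f j
      = ∑ j ∈ range m, (f (j + 1) + f (m - j)) := by
    rw [Finset.sum_add_distrib, ← hrefl, ← hS]
    ring
  rw [show (∑ j ∈ range (m+1), ⌈((j : ℚ) * (a : ℚ)) / ((m+1 : ℕ) : ℚ)⌉) = ∑ j ∈ range (m+1), f j from rfl,
    this, Finset.sum_congr rfl hpair, Finset.sum_const, Finset.card_range]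
  push_cast
  ring

/-- Sum over `N` periods. -/
lemma tTau_sum_ceil_blocks (a b : ℕ) (hb : 0 < b) (N : ℕ) :
    2 * ∑ j ∈ range (N * b), ⌈((j : ℚ) * (a : ℚ)) / (b : ℚ)⌉
      = 2 * (N : ℤ) * (∑ j ∈ range b, ⌈((j : ℚ) * (a : ℚ)) / (b : ℚ)⌉)
        + (a : ℤ) * (b : ℤ) * (N : ℤ) * ((N : ℤ) - 1) := by
  induction N with
  | zero => simp
  | succ N ih =>
    have hsplit : ∑ j ∈ range ((N + 1) * b), ⌈((j : ℚ) * (a : ℚ)) / (b : ℚ)⌉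
        = (∑ j ∈ range (N * b), ⌈((j : ℚ) * (a : ℚ)) / (b : ℚ)⌉)
          + ∑ j ∈ range b, ⌈(((N * b + j : ℕ) : ℚ) * (a : ℚ)) / (b : ℚ)⌉ := by
      rw [show (N + 1) * b = N * b + b by ring, Finset.sum_range_add]
    have hblock : ∑ j ∈ range b, ⌈(((N * b + j : ℕ) : ℚ) * (a : ℚ)) / (b : ℚ)⌉
        = (∑ j ∈ range b, ⌈((j : ℚ) * (a : ℚ)) / (b : ℚ)⌉) + (b : ℤ) * ((N : ℤ) * (a : ℤ)) := by
      rw [Finset.sum_congr rfl (fun j _ => tTau_ceil_shift a b hb N j),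
        Finset.sum_add_distrib, Finset.sum_const, Finset.card_range]
      simp [mul_comm]
    rw [hsplit, hblock]
    push_cast
    linear_combination ih

/-- Sum of `j / r` (integer division) over `range (N * r + s)` with `s ≤ r`. -/
lemma tTau_sum_ediv (r : ℕ) (hr : 0 < r) (N s : ℕ) (hs : s ≤ r) :
    2 * ∑ j ∈ range (N * r + s), ((j : ℤ) / (r : ℤ))
      = (r : ℤ) * (N : ℤ) * ((N : ℤ) - 1) + 2 * (N : ℤ) * (s : ℤ) := by
  have hshift : ∀ (c j : ℕ), (((c * r + j : ℕ) : ℤ)) / (r : ℤ) = (j : ℤ) / (r : ℤ) + (c : ℤ) := by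
    intro c j
    push_cast
    rw [add_comm ((c : ℤ) * (r : ℤ)) (j : ℤ), Int.add_mul_ediv_right _ _ (by exact_mod_cast hr.ne')]
  have hmain : ∀ N : ℕ, 2 * ∑ j ∈ range (N * r), ((j : ℤ) / (r : ℤ))
      = (r : ℤ) * (N : ℤ) * ((N : ℤ) - 1) := by
    intro N
    induction N with
    | zero => simp
    | succ N ih =>
      rw [show (N + 1) * r = N * r + r by ring, Finset.sum_range_add]
      have hblock : ∑ j ∈ range r, (((N * r + j : ℕ) : ℤ)) / (r : ℤ)
          = (r : ℤ) * (N : ℤ) := by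
        rw [Finset.sum_congr rfl (fun j hj => hshift N j)]
        rw [Finset.sum_add_distrib, Finset.sum_const, Finset.card_range]
        have hz : ∀ j ∈ range r, ((j : ℤ)) / (r : ℤ) = 0 := by
          intro j hj
          simp only [Finset.mem_range] at hj
          exact Int.ediv_eq_zero_of_lt (by positivity) (by exact_mod_cast hj)
        rw [Finset.sum_congr rfl hz]
        simp [mul_comm]
      rw [hblock]
      push_cast
      linear_combination ih
  rw [Finset.sum_range_add]
  have htail : ∑ j ∈ range s, (((N * r + j : ℕ) : ℤ)) / (r : ℤ) = (s : ℤ) * (N : ℤ) := by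
    rw [Finset.sum_congr rfl (fun j hj => hshift N j)]
    have hz : ∀ j ∈ range s, ((j : ℤ)) / (r : ℤ) = 0 := by
      intro j hj
      simp only [Finset.mem_range] at hj
      exact Int.ediv_eq_zero_of_lt (by positivity) (by exact_mod_cast (lt_of_lt_of_le hj hs))
    rw [Finset.sum_congr rfl (fun j hj => by rw [hz j hj])]
    rw [Finset.sum_add_distrib, Finset.sum_const, Finset.card_range]
    simp [mul_comm]
  rw [htail]
  linear_combination hmain N

/-- `Δ_j = 1 + 2j − ⌈jp'/p⌉ − ⌈jq'/q⌉ − ⌈j(pq−2)/(pq−1)⌉`, the increment of the τ-function of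
the negative definite Seifert manifold `Σ(−2,(p,p'),(q,q'),(pq−1,pq−2)) = −S³₁(T_{p,q})`. -/
def torusDelta (p q p' q' : ℕ) (j : ℕ) : ℤ :=
  1 + 2 * (j : ℤ) - ⌈((j : ℚ) * (p' : ℚ)) / (p : ℚ)⌉ - ⌈((j : ℚ) * (q' : ℚ)) / (q : ℚ)⌉
    - ⌈((j : ℚ) * ((p : ℚ) * (q : ℚ) - 2)) / ((p : ℚ) * (q : ℚ) - 1)⌉

/-- `τ(m) = Σ_{j=0}^{m−1} Δ_j`. -/
def torusTau (p q p' q' : ℕ) (m : ℕ) : ℤ := ∑ j ∈ Finset.range m, torusDelta p q p' q' j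

set_option maxHeartbeats 1000000 in
/-- for `0 ≤ n ≤ 2δ−3` one has `τ(M_n) = n(n−2δ+3)/2 + 1`, with `M_n = npq+1`. -/
theorem torusTau_at_max (p q : ℕ) (hp : 2 ≤ p) (hpq : p < q) (hcop : Nat.Coprime p q)
    (δ : ℕ) (hδ : 2 * δ = (p - 1) * (q - 1))
    (p' : ℕ) (hp'pos : 0 < p') (hp'lt : p' < p) (hp' : p' * q ≡ 1 [MOD p])
    (q' : ℕ) (hq'pos : 0 < q') (hq'lt : q' < q) (hq' : p * q' ≡ 1 [MOD q])
    (n : ℕ) (hn : (n : ℤ) ≤ 2 * (δ : ℤ) - 3) :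
    (torusTau p q p' q' (n * p * q + 1) : ℚ)
      = (n : ℚ) * ((n : ℚ) - 2 * (δ : ℚ) + 3) / 2 + 1 := by
  have hq3 : 3 ≤ q := by omega
  have hp0 : 0 < p := by omega
  have hq0 : 0 < q := by omega
  have hpq6 : 6 ≤ p * q := by calc (6:ℕ) = 2 * 3 := rfl
                                   _ ≤ p * q := Nat.mul_le_mul hp hq3
  have hr0 : 0 < p * q - 1 := by omega
  set r : ℕ := p * q - 1 with hrdef
  -- coprimality facts
  have hp'cop : Nat.Coprime p' p := by
    have h1 : Nat.gcd (p' * q) p = Nat.gcd 1 p := Nat.ModEq.gcd_eq hp'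
    have h2 : Nat.Coprime (p' * q) p := by
      rw [Nat.Coprime, h1, Nat.gcd_one_left]
    exact Nat.Coprime.coprime_dvd_left (dvd_mul_right p' q) h2
  have hq'cop : Nat.Coprime q' q := by
    have h1 : Nat.gcd (p * q') q = Nat.gcd 1 q := Nat.ModEq.gcd_eq hq'
    have h2 : Nat.Coprime (p * q') q := by
      rw [Nat.Coprime, h1, Nat.gcd_one_left]
    exact Nat.Coprime.coprime_dvd_left (dvd_mul_left q' p) h2
  -- cast facts
  have hPZ : (2:ℤ) ≤ (p:ℤ) := by exact_mod_cast hp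
  have hQZ : (3:ℤ) ≤ (q:ℤ) := by exact_mod_cast hq3
  have hp'1 : (1:ℤ) ≤ (p':ℤ) := by exact_mod_cast hp'pos
  have hp'2 : (p':ℤ) ≤ (p:ℤ) - 1 := by
    have : (p':ℤ) < (p:ℤ) := by exact_mod_cast hp'lt
    omega
  have hq'1 : (1:ℤ) ≤ (q':ℤ) := by exact_mod_cast hq'pos
  have hq'2 : (q':ℤ) ≤ (q:ℤ) - 1 := by
    have : (q':ℤ) < (q:ℤ) := by exact_mod_cast hq'lt
    omega
  have hδZ : 2 * (δ:ℤ) = ((p:ℤ) - 1) * ((q:ℤ) - 1) := by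
    have h := congrArg (fun x : ℕ => (x:ℤ)) hδ
    simp only [Nat.cast_mul, Nat.cast_ofNat,
      Nat.cast_sub (show 1 ≤ p by omega), Nat.cast_sub (show 1 ≤ q by omega),
      Nat.cast_one] at h
    exact_mod_cast h
  have hrZ : ((r:ℕ):ℤ) = (p:ℤ) * (q:ℤ) - 1 := by
    rw [hrdef, Nat.cast_sub (show 1 ≤ p * q by omega)]
    push_cast
    ring
  -- key identity  q*p' + p*q' = p*q + 1
  have key : (q:ℤ) * (p':ℤ) + (p:ℤ) * (q':ℤ) = (p:ℤ) * (q:ℤ) + 1 := by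
    have hd1 : (p:ℤ) ∣ (1 - (p':ℤ) * (q:ℤ)) := by
      have h := hp'.dvd
      push_cast at h
      convert h using 1
    have hd2 : (q:ℤ) ∣ (1 - (p:ℤ) * (q':ℤ)) := by
      have h := hq'.dvd
      push_cast at h
      convert h using 1
    have hdp : (p:ℤ) ∣ ((q:ℤ) * (p':ℤ) + (p:ℤ) * (q':ℤ) - 1) := by
      obtain ⟨c, hc⟩ := hd1
      exact ⟨q' - c, by linarith [hc]⟩
    have hdq : (q:ℤ) ∣ ((q:ℤ) * (p':ℤ) + (p:ℤ) * (q':ℤ) - 1) := by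
      obtain ⟨c, hc⟩ := hd2
      exact ⟨p' - c, by linarith [hc]⟩
    have hcopZ : IsCoprime (p:ℤ) (q:ℤ) := by
      rw [Int.isCoprime_iff_gcd_eq_one]
      exact_mod_cast hcop
    obtain ⟨k, hk⟩ := hcopZ.mul_dvd hdp hdq
    have hb1 : (q:ℤ) * 1 ≤ (q:ℤ) * (p':ℤ) := by
      apply mul_le_mul_of_nonneg_left hp'1
      linarith
    have hb2 : (p:ℤ) * 1 ≤ (p:ℤ) * (q':ℤ) := by
      apply mul_le_mul_of_nonneg_left hq'1
      linarith
    have hb3 : (q:ℤ) * (p':ℤ) ≤ (q:ℤ) * ((p:ℤ) - 1) := by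
      apply mul_le_mul_of_nonneg_left hp'2
      linarith
    have hb4 : (p:ℤ) * (q':ℤ) ≤ (p:ℤ) * ((q:ℤ) - 1) := by
      apply mul_le_mul_of_nonneg_left hq'2
      linarith
    have hkl : 1 ≤ k := by
      rcases le_or_gt k 0 with h | h
      · exfalso
        have hle : (p:ℤ) * (q:ℤ) * k ≤ 0 :=
          mul_nonpos_of_nonneg_of_nonpos (by positivity) h
        linarith
      · exact h
    have hku : k ≤ 1 := by
      by_contra h
      push_neg at h
      have h2 : (p:ℤ) * (q:ℤ) * 2 ≤ (p:ℤ) * (q:ℤ) * k := by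
        apply mul_le_mul_of_nonneg_left (by omega) (by positivity)
      linarith
    have hk1 : k = 1 := le_antisymm hku hkl
    rw [hk1] at hk
    linarith
  -- bound n + 1 ≤ r
  have hsZ : (n:ℤ) + 1 ≤ ((r:ℕ):ℤ) := by
    rw [hrZ]
    linarith [hδZ, hn, hPZ, hQZ]
  have hs : n + 1 ≤ r := by exact_mod_cast hsZ
  -- M decomposition for the third sum
  have hMr : n * p * q + 1 = n * r + (n + 1) := by
    have h1 : n * r + n = n * (p * q) := by
      rw [hrdef, ← Nat.mul_succ]
      congr 1
      omega
    rw [mul_assoc, ← h1]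
    ring
  -- pointwise value of the third ceiling
  have hC : ∀ j : ℕ, ⌈((j : ℚ) * ((p : ℚ) * (q : ℚ) - 2)) / ((p : ℚ) * (q : ℚ) - 1)⌉
      = (j:ℤ) - (j:ℤ) / ((r:ℕ):ℤ) := by
    intro j
    have hrq : ((r:ℕ):ℚ) = (p:ℚ) * (q:ℚ) - 1 := by
      rw [hrdef, Nat.cast_sub (show 1 ≤ p * q by omega)]
      push_cast
      ring
    have hrne : ((r:ℕ):ℚ) ≠ 0 := by
      have : (0:ℚ) < ((r:ℕ):ℚ) := by exact_mod_cast hr0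
      linarith
    have heq : ((j : ℚ) * ((p : ℚ) * (q : ℚ) - 2)) / ((p : ℚ) * (q : ℚ) - 1)
        = -((j:ℚ) / ((r:ℕ):ℚ)) + ((j:ℤ):ℚ) := by
      have h2 : (p:ℚ) * (q:ℚ) - 2 = ((r:ℕ):ℚ) - 1 := by rw [hrq]; ring
      rw [h2, ← hrq]
      field_simp
      push_cast
      ring
    rw [heq, Int.ceil_add_intCast, Int.ceil_neg]
    have hfl : ⌊(j:ℚ) / ((r:ℕ):ℚ)⌋ = (j:ℤ) / ((r:ℕ):ℤ) := by
      have h3 := Rat.floor_intCast_div_natCast (j:ℤ) r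
      push_cast at h3
      exact h3
    rw [hfl]
    ring
  -- decompose the tau sum
  have hτ : torusTau p q p' q' (n * p * q + 1)
      = (∑ j ∈ Finset.range (n * p * q + 1), (1 + 2 * (j:ℤ)))
        - (∑ j ∈ Finset.range (n * p * q + 1), ⌈((j : ℚ) * (p' : ℚ)) / (p : ℚ)⌉)
        - (∑ j ∈ Finset.range (n * p * q + 1), ⌈((j : ℚ) * (q' : ℚ)) / (q : ℚ)⌉)
        - ((∑ j ∈ Finset.range (n * p * q + 1), (j:ℤ))
            - ∑ j ∈ Finset.range (n * p * q + 1), ((j:ℤ) / ((r:ℕ):ℤ))) := by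
    rw [torusTau]
    have h1 : ∀ j ∈ Finset.range (n * p * q + 1), torusDelta p q p' q' j
        = ((1 + 2 * (j:ℤ)) - ⌈((j : ℚ) * (p' : ℚ)) / (p : ℚ)⌉
            - ⌈((j : ℚ) * (q' : ℚ)) / (q : ℚ)⌉ - ((j:ℤ) - (j:ℤ) / ((r:ℕ):ℤ))) := by
      intro j _
      rw [torusDelta, hC j]
    rw [Finset.sum_congr rfl h1, Finset.sum_sub_distrib, Finset.sum_sub_distrib,
      Finset.sum_sub_distrib, Finset.sum_sub_distrib]
  -- closed forms
  have hcastsum : ((∑ i ∈ Finset.range (n * p * q + 1), i : ℕ) : ℤ)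
      = ∑ j ∈ Finset.range (n * p * q + 1), (j:ℤ) := by push_cast; rfl
  have hJ2 : 2 * (∑ j ∈ Finset.range (n * p * q + 1), (j:ℤ))
      = ((n:ℤ) * p * q + 1) * ((n:ℤ) * p * q) := by
    have h := Finset.sum_range_id_mul_two (n * p * q + 1)
    have h3 := congrArg (fun x : ℕ => (x:ℤ)) h
    simp only [Nat.cast_mul, Nat.add_sub_cancel] at h3
    rw [hcastsum] at h3
    push_cast at h3
    linarith [h3]
  have hL : 2 * (∑ j ∈ Finset.range (n * p * q + 1), (1 + 2 * (j:ℤ)))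
      = 2 * ((n:ℤ) * p * q + 1) * ((n:ℤ) * p * q + 1) := by
    rw [Finset.sum_add_distrib, Finset.sum_const, Finset.card_range, ← Finset.mul_sum,
      nsmul_eq_mul, mul_one]
    push_cast
    nlinarith [hJ2]
  have hA2 : 2 * (∑ j ∈ Finset.range (n * p * q + 1), ⌈((j : ℚ) * (p' : ℚ)) / (p : ℚ)⌉)
      = ((n:ℤ) * q) * (((p:ℤ) - 1) * ((p':ℤ) + 1))
        + (p':ℤ) * (p:ℤ) * ((n:ℤ) * q) * ((n:ℤ) * q - 1) + 2 * ((n:ℤ) * q) * (p':ℤ) := by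
    rw [show n * p * q + 1 = (n * q) * p + 1 by ring, Finset.sum_range_succ,
      tTau_ceil_mul p' p (n * q) hp0]
    have hb := tTau_sum_ceil_blocks p' p hp0 (n * q)
    have hper := tTau_sum_ceil_period p' p hp0 hp'cop
    push_cast at hb hper ⊢
    linear_combination hb + ((n:ℤ) * (q:ℤ)) * hper
  have hB2 : 2 * (∑ j ∈ Finset.range (n * p * q + 1), ⌈((j : ℚ) * (q' : ℚ)) / (q : ℚ)⌉)
      = ((n:ℤ) * p) * (((q:ℤ) - 1) * ((q':ℤ) + 1))
        + (q':ℤ) * (q:ℤ) * ((n:ℤ) * p) * ((n:ℤ) * p - 1) + 2 * ((n:ℤ) * p) * (q':ℤ) := by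
    rw [show n * p * q + 1 = (n * p) * q + 1 by ring, Finset.sum_range_succ,
      tTau_ceil_mul q' q (n * p) hq0]
    have hb := tTau_sum_ceil_blocks q' q hq0 (n * p)
    have hper := tTau_sum_ceil_period q' q hq0 hq'cop
    push_cast at hb hper ⊢
    linear_combination hb + ((n:ℤ) * (p:ℤ)) * hper
  have hD2 : 2 * (∑ j ∈ Finset.range (n * p * q + 1), ((j:ℤ) / ((r:ℕ):ℤ)))
      = ((r:ℕ):ℤ) * (n:ℤ) * ((n:ℤ) - 1) + 2 * (n:ℤ) * ((n:ℤ) + 1) := by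
    rw [hMr]
    have h := tTau_sum_ediv r hr0 n (n + 1) hs
    push_cast at h ⊢
    linarith [h]
  -- final integer identity
  have hfinal : 2 * torusTau p q p' q' (n * p * q + 1)
      = (n:ℤ) * ((n:ℤ) - 2 * (δ:ℤ) + 3) + 2 := by
    rw [hτ]
    linear_combination hL - hA2 - hB2 - hJ2 + hD2
      - ((n:ℤ) * ((n:ℤ) * (p:ℤ) * (q:ℤ) + 1)) * key + (n:ℤ) * hδZ
      + ((n:ℤ) * ((n:ℤ) - 1)) * hrZ
  -- conclude over ℚ
  have hQfin := congrArg (fun z : ℤ => (z:ℚ)) hfinal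
  push_cast at hQfin
  linear_combination hQfin / 2
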